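/- arXiv:2307.15489 — 5 statements merged into one kernel-verified Lean document; each statement's English description precedes it below -/
import Mathlib

section
/- Strong Fenchel duality for the discrete TV-ULoG problem (Proposition 1): Let ι and κ be nonempty finite index types, let A : (ι → ℝ) →ₗ[ℝ] (κ → EuclideanSpace ℝ (Fin 3)) be a linear map and Aᵀ its adjoint with respect to the standard inner products, and let l, u : ι → ℝ satisfy l i ≤ u i for all i. Then the infimum over w in the discrete tube [l, u] of ∑_{j ∈ κ} ‖(A w) j‖ equals the supremum over v ∈ S of the infimum over w ∈ [l, u] of ⟨Aᵀ v, w⟩, and both the outer infimum and the outer supremum are attained. -/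
open scoped BigOperators

/-- **Strong Fenchel duality for the discrete TV-ULoG problem** (Proposition 1).
The infimum over `w` in the discrete tube `[l, u]` of `∑ j, ‖(A w) j‖` equals the
supremum over `v ∈ S` of the infimum over `w ∈ [l, u]` of `⟨Aᵀ v, w⟩`, and both the
outer infimum and the outer supremum are attained. -/
theorem tv_ulog_strong_fenchel_duality
    {ι κ : Type*} [Fintype ι] [Fintype κ] [Nonempty ι] [Nonempty κ]
    (A : (ι → ℝ) →ₗ[ℝ] (κ → EuclideanSpace ℝ (Fin 3)))
    (At : (κ → EuclideanSpace ℝ (Fin 3)) →ₗ[ℝ] (ι → ℝ))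
    (hadj : ∀ (v : κ → EuclideanSpace ℝ (Fin 3)) (w : ι → ℝ),
      ∑ i, At v i * w i = ∑ j, (inner ℝ (v j) (A w j) : ℝ))
    (l u : ι → ℝ) (hlu : ∀ i, l i ≤ u i) :
    ∃ p : ℝ,
      IsLeast ((fun w => ∑ j, ‖A w j‖) '' Set.Icc l u) p ∧
      IsGreatest
        ((fun v => sInf ((fun w => ∑ i, At v i * w i) '' Set.Icc l u)) ''
          {v : κ → EuclideanSpace ℝ (Fin 3) | ∀ j, ‖v j‖ ≤ 1}) p := by
  classical
  have hCne : (Set.Icc l u).Nonempty := ⟨l, le_rfl, fun i => hlu i⟩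
  have hCcpt : IsCompact (Set.Icc l u) := isCompact_Icc
  have hAcont : Continuous A := A.continuous_of_finiteDimensional
  have hfcont : Continuous fun w : ι → ℝ => ∑ j, ‖A w j‖ :=
    continuous_finset_sum _ fun j _ => ((continuous_apply j).comp hAcont).norm
  obtain ⟨w₀, hw₀C, hmin⟩ := hCcpt.exists_isMinOn hCne hfcont.continuousOn
  have hmin' : ∀ w ∈ Set.Icc l u, ∑ j, ‖A w₀ j‖ ≤ ∑ j, ‖A w j‖ := fun w hw => hmin hw
  set p := ∑ j, ‖A w₀ j‖ with hp
  have hp0 : 0 ≤ p := Finset.sum_nonneg fun j _ => norm_nonneg _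
  have hecont : ∀ v : κ → EuclideanSpace ℝ (Fin 3),
      Continuous fun w : ι → ℝ => ∑ i, At v i * w i := fun v =>
    continuous_finset_sum _ fun i _ => continuous_const.mul (continuous_apply i)
  have hbdd : ∀ v : κ → EuclideanSpace ℝ (Fin 3),
      BddBelow ((fun w => ∑ i, At v i * w i) '' Set.Icc l u) := fun v =>
    (hCcpt.image (hecont v)).bddBelow
  -- weak duality
  have hweak : ∀ v : κ → EuclideanSpace ℝ (Fin 3), (∀ j, ‖v j‖ ≤ 1) →
      sInf ((fun w => ∑ i, At v i * w i) '' Set.Icc l u) ≤ p := by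
    intro v hv
    refine (csInf_le (hbdd v) ⟨w₀, hw₀C, rfl⟩).trans ?_
    show ∑ i, At v i * w₀ i ≤ p
    rw [hadj]
    refine Finset.sum_le_sum fun j _ => ?_
    refine (real_inner_le_norm _ _).trans ?_
    have := mul_le_mul_of_nonneg_right (hv j) (norm_nonneg (A w₀ j))
    simpa using this
  refine ⟨p, ⟨⟨w₀, hw₀C, rfl⟩, ?_⟩, ?_, ?_⟩
  · rintro x ⟨w, hw, rfl⟩
    exact hmin' w hw
  · -- membership of the greatest element
    rcases eq_or_lt_of_le hp0 with hp0' | hp0'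
    · -- p = 0 : take v = 0
      refine ⟨0, fun j => by simp, ?_⟩
      simp only [map_zero, Pi.zero_apply, zero_mul, Finset.sum_const_zero]
      rw [Set.Nonempty.image_const hCne, csInf_singleton]
      exact hp0'
    · -- p > 0 : separation argument
      set K : Set (κ → EuclideanSpace ℝ (Fin 3)) := A '' Set.Icc l u with hK
      set B : Set (κ → EuclideanSpace ℝ (Fin 3)) := {y | ∑ j, ‖y j‖ < p} with hB
      have hNcont : Continuous fun y : κ → EuclideanSpace ℝ (Fin 3) => ∑ j, ‖y j‖ :=
        continuous_finset_sum _ fun j _ => (continuous_apply j).norm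
      have hBopen : IsOpen B := isOpen_lt hNcont continuous_const
      have hBconv : Convex ℝ B := by
        intro y hy z hz a b ha hb hab
        simp only [hB, Set.mem_setOf_eq] at hy hz ⊢
        have key : ∑ j, ‖(a • y + b • z) j‖ ≤ a * (∑ j, ‖y j‖) + b * (∑ j, ‖z j‖) := by
          calc ∑ j, ‖(a • y + b • z) j‖ ≤ ∑ j, (a * ‖y j‖ + b * ‖z j‖) := by
                refine Finset.sum_le_sum fun j _ => ?_
                simp only [Pi.add_apply, Pi.smul_apply]
                refine (norm_add_le _ _).trans ?_
                rw [norm_smul, norm_smul, Real.norm_eq_abs, Real.norm_eq_abs,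
                  abs_of_nonneg ha, abs_of_nonneg hb]
            _ = a * (∑ j, ‖y j‖) + b * (∑ j, ‖z j‖) := by
                rw [Finset.sum_add_distrib, ← Finset.mul_sum, ← Finset.mul_sum]
        rcases lt_or_eq_of_le ha with ha' | ha'
        · have h1 : a * (∑ j, ‖y j‖) < a * p := by
            exact mul_lt_mul_of_pos_left hy ha'
          have h2 : b * (∑ j, ‖z j‖) ≤ b * p := mul_le_mul_of_nonneg_left hz.le hb
          calc ∑ j, ‖(a • y + b • z) j‖ ≤ a * (∑ j, ‖y j‖) + b * (∑ j, ‖z j‖) := key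
            _ < a * p + b * p := add_lt_add_of_lt_of_le h1 h2
            _ = p := by rw [← add_mul, hab, one_mul]
        · have hb1 : b = 1 := by linarith
          have h2 : b * (∑ j, ‖z j‖) < b * p := by
            rw [hb1, one_mul, one_mul]; exact hz
          calc ∑ j, ‖(a • y + b • z) j‖ ≤ a * (∑ j, ‖y j‖) + b * (∑ j, ‖z j‖) := key
            _ < a * p + b * p := by
                rw [← ha', zero_mul, zero_mul, zero_add, zero_add]; exact h2
            _ = p := by rw [← add_mul, hab, one_mul]
      have hKconv : Convex ℝ K := (convex_Icc l u).linear_image A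
      have hdisj : Disjoint B K := by
        rw [Set.disjoint_left]
        rintro y hyB ⟨w, hw, rfl⟩
        simp only [hB, Set.mem_setOf_eq] at hyB
        exact absurd (hmin' w hw) (not_le.2 hyB)
      obtain ⟨f, c, hfB, hfK⟩ := geometric_hahn_banach_open hBconv hBopen hKconv hdisj
      have h0B : (0 : κ → EuclideanSpace ℝ (Fin 3)) ∈ B := by
        simp only [hB, Set.mem_setOf_eq, Pi.zero_apply, norm_zero, Finset.sum_const_zero]
        exact hp0'
      have hc0 : 0 < c := by
        have := hfB 0 h0B
        simpa using this
      -- component representation of f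
      let v : κ → EuclideanSpace ℝ (Fin 3) := fun j =>
        (InnerProductSpace.toDual ℝ (EuclideanSpace ℝ (Fin 3))).symm
          (LinearMap.toContinuousLinearMap
            (f.toLinearMap.comp (LinearMap.single ℝ (fun _ : κ => EuclideanSpace ℝ (Fin 3)) j)))
      have hvinner : ∀ (j : κ) (x : EuclideanSpace ℝ (Fin 3)),
          (inner ℝ (v j) x : ℝ) = f (Pi.single j x) := by
        intro j x
        simp only [v]
        rw [InnerProductSpace.toDual_symm_apply]
        simp
      have hfdec : ∀ y : κ → EuclideanSpace ℝ (Fin 3),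
          f y = ∑ j, (inner ℝ (v j) (y j) : ℝ) := by
        intro y
        conv_lhs => rw [← Finset.univ_sum_single y]
        rw [map_sum]
        exact Finset.sum_congr rfl fun j _ => (hvinner j (y j)).symm
      -- key bound : p * ‖v j‖ ≤ c
      have hpvc : ∀ j, p * ‖v j‖ ≤ c := by
        intro j
        rcases eq_or_ne (v j) 0 with h | h
        · rw [h, norm_zero, mul_zero]; exact hc0.le
        · by_contra hcon
          push_neg at hcon
          have hvn : 0 < ‖v j‖ := norm_pos_iff.2 h
          set s := c / ‖v j‖ with hs
          have hsp : s < p := by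
            rw [hs, div_lt_iff₀ hvn]
            linarith
          have hs0 : 0 < s := div_pos hc0 hvn
          set b : κ → EuclideanSpace ℝ (Fin 3) := Pi.single j ((s / ‖v j‖) • v j) with hbdef
          have hNb : ∑ k, ‖b k‖ = s := by
            rw [Finset.sum_eq_single j]
            · rw [hbdef, Pi.single_eq_same, norm_smul, Real.norm_eq_abs,
                abs_of_nonneg (div_pos hs0 hvn).le]
              field_simp
            · intro k _ hk
              rw [hbdef, Pi.single_eq_of_ne hk, norm_zero]
            · intro hj; exact absurd (Finset.mem_univ j) hj
          have hbB : b ∈ B := by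
            simp only [hB, Set.mem_setOf_eq]
            rw [hNb]; exact hsp
          have hfb : f b = c := by
            rw [hbdef, ← hvinner j, real_inner_smul_right,
              real_inner_self_eq_norm_mul_norm, hs, div_div]
            exact div_mul_cancel₀ c (by positivity)
          have := hfB b hbB
          rw [hfb] at this
          exact lt_irrefl c this
      -- lower bound : for all w in the box, c ≤ f (A w)
      have hclow : ∀ w ∈ Set.Icc l u, c ≤ ∑ j, (inner ℝ (v j) (A w j) : ℝ) := by
        intro w hw
        rw [← hfdec]
        exact hfK (A w) ⟨w, hw, rfl⟩
      -- the dual optimum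
      refine ⟨(p / c) • v, ?_, ?_⟩
      · intro j
        rw [Pi.smul_apply, norm_smul, Real.norm_eq_abs,
          abs_of_nonneg (div_nonneg hp0 hc0.le), div_mul_eq_mul_div, div_le_one hc0]
        exact hpvc j
      · -- sInf equals p
        have hval : ∀ w ∈ Set.Icc l u,
            ∑ i, At ((p / c) • v) i * w i = (p / c) * ∑ j, (inner ℝ (v j) (A w j) : ℝ) := by
          intro w hw
          rw [hadj, Finset.mul_sum]
          refine Finset.sum_congr rfl fun j _ => ?_
          rw [Pi.smul_apply, real_inner_smul_left]
        have hlow : ∀ x ∈ (fun w => ∑ i, At ((p / c) • v) i * w i) '' Set.Icc l u, p ≤ x := by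
          rintro x ⟨w, hw, rfl⟩
          show p ≤ ∑ i, At ((p / c) • v) i * w i
          rw [hval w hw]
          have : (p / c) * c ≤ (p / c) * ∑ j, (inner ℝ (v j) (A w j) : ℝ) :=
            mul_le_mul_of_nonneg_left (hclow w hw) (div_nonneg hp0 hc0.le)
          calc p = (p / c) * c := by field_simp
            _ ≤ _ := this
        refine le_antisymm ?_ (le_csInf (hCne.image _) hlow)
        refine (csInf_le (hbdd _) ⟨w₀, hw₀C, rfl⟩).trans ?_
        show ∑ i, At ((p / c) • v) i * w₀ i ≤ p
        rw [hadj]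
        refine Finset.sum_le_sum fun j _ => ?_
        refine (real_inner_le_norm _ _).trans ?_
        have hnj : ‖((p / c) • v) j‖ ≤ 1 := by
          rw [Pi.smul_apply, norm_smul, Real.norm_eq_abs,
            abs_of_nonneg (div_nonneg hp0 hc0.le), div_mul_eq_mul_div, div_le_one hc0]
          exact hpvc j
        have := mul_le_mul_of_nonneg_right hnj (norm_nonneg (A w₀ j))
        simpa using this
  · rintro x ⟨v, hv, rfl⟩
    exact hweak v hv
end

section
/- Nesterov smoothing of the dual TV-ULoG problem (Proposition 2): Let ι, κ be nonempty finite index types, A : (ι → ℝ) →ₗ[ℝ] (κ → EuclideanSpace ℝ (Fin 3)) a linear map with adjoint Aᵀ, l, u : ι → ℝ with l i ≤ u i for all i, and μ > 0. Then for every v : κ → EuclideanSpace ℝ (Fin 3), the supremum over w in the discrete tube [l, u] of ⟨−Aᵀ v, w⟩ − (μ/2)‖w‖² is attained and equals (μ/2)·( ‖(1/μ)·Aᵀ v‖² − ‖(−(1/μ)·Aᵀ v) − P_{[l,u]}(−(1/μ)·Aᵀ v)‖² ), where P_{[l,u]} is the metric projection onto the tube. -/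
open scoped BigOperators

/-- **Nesterov smoothing of the dual TV-ULoG problem** (Proposition 2).
For every `v`, the supremum over `w` in the discrete tube `[l, u]` of
`⟨−Aᵀ v, w⟩ − (μ/2)‖w‖²` is attained and equals
`(μ/2)·(‖(1/μ)·Aᵀ v‖² − ‖(−(1/μ)·Aᵀ v) − P_{[l,u]}(−(1/μ)·Aᵀ v)‖²)`,
where the metric projection `p = P_{[l,u]}(−(1/μ)·Aᵀ v)` is characterized by `p`
lying in the tube and minimizing the (squared) Euclidean distance to `−(1/μ)·Aᵀ v`.
Euclidean inner products and norms on `ι → ℝ` are spelled out as sums. -/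
theorem tv_ulog_dual_nesterov_smoothing
    {ι κ : Type*} [Fintype ι] [Fintype κ] [Nonempty ι] [Nonempty κ]
    (A : (ι → ℝ) →ₗ[ℝ] (κ → EuclideanSpace ℝ (Fin 3)))
    (At : (κ → EuclideanSpace ℝ (Fin 3)) →ₗ[ℝ] (ι → ℝ))
    (hadj : ∀ (v : κ → EuclideanSpace ℝ (Fin 3)) (w : ι → ℝ),
      ∑ i, At v i * w i = ∑ j, (inner ℝ (v j) (A w j) : ℝ))
    (l u : ι → ℝ) (hlu : ∀ i, l i ≤ u i)
    (μ : ℝ) (hμ : 0 < μ)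
    (v : κ → EuclideanSpace ℝ (Fin 3))
    (p : ι → ℝ) (hpC : p ∈ Set.Icc l u)
    (hproj : ∀ w ∈ Set.Icc l u,
      ∑ i, ((-(1 / μ) • At v) i - p i) ^ 2 ≤ ∑ i, ((-(1 / μ) • At v) i - w i) ^ 2) :
    IsGreatest
      ((fun w => (∑ i, (-(At v)) i * w i) - μ / 2 * ∑ i, (w i) ^ 2) '' Set.Icc l u)
      (μ / 2 * ((∑ i, ((1 / μ) * At v i) ^ 2)
        - ∑ i, ((-(1 / μ) • At v) i - p i) ^ 2)) := by
  have hμ' : μ ≠ 0 := hμ.ne'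
  have key : ∀ w : ι → ℝ,
      (∑ i, (-(At v)) i * w i) - μ / 2 * ∑ i, (w i) ^ 2
        = μ / 2 * ((∑ i, ((1 / μ) * At v i) ^ 2)
            - ∑ i, ((-(1 / μ) • At v) i - w i) ^ 2) := by
    intro w
    rw [mul_sub, Finset.mul_sum, Finset.mul_sum, Finset.mul_sum,
      ← Finset.sum_sub_distrib, ← Finset.sum_sub_distrib]
    refine Finset.sum_congr rfl fun i _ => ?_
    simp only [Pi.smul_apply, Pi.neg_apply, smul_eq_mul]
    field_simp
    ring
  constructor
  · exact ⟨p, hpC, key p⟩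
  · rintro x ⟨w, hw, rfl⟩
    dsimp only
    rw [key w]
    have := hproj w hw
    nlinarith [hμ.le]
end

section
/- Nesterov smoothing of the primal TV-ULoG objective (Proposition 3): Let ι, κ be nonempty finite index types, A : (ι → ℝ) →ₗ[ℝ] (κ → EuclideanSpace ℝ (Fin 3)) a linear map, and μ > 0. Then for every x : ι → ℝ, the supremum over w ∈ S of ⟨w, A x⟩ − (μ/2)‖w‖² is attained and equals ∑_{j ∈ κ} h_μ((A x) j). -/
open scoped BigOperators

/-- The Huber function `h_μ` on `EuclideanSpace ℝ (Fin 3)`. -/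
noncomputable def huber (μ : ℝ) (v : EuclideanSpace ℝ (Fin 3)) : ℝ :=
  if μ ≤ ‖v‖ then ‖v‖ - μ / 2 else ‖v‖ ^ 2 / (2 * μ)

lemma huber_bound (μ : ℝ) (hμ : 0 < μ) (v w : EuclideanSpace ℝ (Fin 3))
    (hw : ‖w‖ ≤ 1) : (inner ℝ w v : ℝ) - μ / 2 * ‖w‖ ^ 2 ≤ huber μ v := by
  have h1 : (inner ℝ w v : ℝ) ≤ ‖w‖ * ‖v‖ := real_inner_le_norm w v
  have ht : (0:ℝ) ≤ ‖w‖ := norm_nonneg w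
  unfold huber
  split_ifs with h
  · nlinarith [mul_nonneg (sub_nonneg.2 hw)
      (show (0:ℝ) ≤ ‖v‖ - μ / 2 - μ * ‖w‖ / 2 by nlinarith)]
  · rw [le_div_iff₀ (by positivity : (0:ℝ) < 2 * μ)]
    nlinarith [sq_nonneg (‖v‖ - μ * ‖w‖)]

lemma huber_eq (μ : ℝ) (hμ : 0 < μ) (v : EuclideanSpace ℝ (Fin 3)) :
    (inner ℝ ((max μ ‖v‖)⁻¹ • v) v : ℝ) - μ / 2 * ‖(max μ ‖v‖)⁻¹ • v‖ ^ 2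
      = huber μ v := by
  have hm : (0:ℝ) < max μ ‖v‖ := lt_max_of_lt_left hμ
  have h1 : (inner ℝ ((max μ ‖v‖)⁻¹ • v) v : ℝ) = (max μ ‖v‖)⁻¹ * ‖v‖ ^ 2 := by
    rw [real_inner_smul_left, real_inner_self_eq_norm_sq]
  have h2 : ‖(max μ ‖v‖)⁻¹ • v‖ = (max μ ‖v‖)⁻¹ * ‖v‖ := by
    rw [norm_smul, Real.norm_eq_abs, abs_of_pos (inv_pos.mpr hm)]
  rw [h1, h2]
  unfold huber
  split_ifs with h
  · rw [max_eq_right h]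
    have hv : (0:ℝ) < ‖v‖ := lt_of_lt_of_le hμ h
    field_simp
  · rw [max_eq_left (le_of_not_ge h)]
    field_simp
    ring

/-- **Nesterov smoothing of the primal TV-ULoG objective** (Proposition 3).
For every `x : ι → ℝ`, the supremum over `w ∈ S` (the product of closed unit
balls) of `⟨w, A x⟩ − (μ/2)‖w‖²` is attained and equals `∑ j, h_μ((A x) j)`. -/
theorem tv_ulog_primal_nesterov_smoothing
    {ι κ : Type*} [Fintype ι] [Fintype κ] [Nonempty ι] [Nonempty κ]
    (A : (ι → ℝ) →ₗ[ℝ] (κ → EuclideanSpace ℝ (Fin 3)))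
    (μ : ℝ) (hμ : 0 < μ) (x : ι → ℝ) :
    IsGreatest
      ((fun w => (∑ j, (inner ℝ (w j) (A x j) : ℝ)) - μ / 2 * ∑ j, ‖w j‖ ^ 2) ''
        {v : κ → EuclideanSpace ℝ (Fin 3) | ∀ j, ‖v j‖ ≤ 1})
      (∑ j, huber μ (A x j)) := by
  constructor
  · refine ⟨fun j => (max μ ‖A x j‖)⁻¹ • (A x j), fun j => ?_, ?_⟩
    · have hm : (0:ℝ) < max μ ‖A x j‖ := lt_max_of_lt_left hμ
      rw [norm_smul, Real.norm_eq_abs, abs_of_pos (inv_pos.mpr hm)]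
      rw [inv_mul_le_iff₀ hm, mul_one]
      exact le_max_right _ _
    · simp only [Finset.mul_sum, ← Finset.sum_sub_distrib]
      exact Finset.sum_congr rfl fun j _ => huber_eq μ hμ (A x j)
  · rintro y ⟨w, hw, rfl⟩
    simp only [Finset.mul_sum, ← Finset.sum_sub_distrib]
    exact Finset.sum_le_sum fun j _ => huber_bound μ hμ (A x j) (w j) (hw j)
end

section
/- Strong duality between the quadratically regularized TV-ULoG problem and the smoothed dual (Remark 4): Let ι, κ be nonempty finite index types, A : (ι → ℝ) →ₗ[ℝ] (κ → EuclideanSpace ℝ (Fin 3)) a linear map with adjoint Aᵀ, l, u : ι → ℝ with l i ≤ u i for all i, and μ > 0. Then the minimum over x in the discrete tube [l, u] of ∑_{j ∈ κ} ‖(A x) j‖ + (μ/2)‖x‖² equals the maximum over v ∈ S of (μ/2)·( ‖(−(1/μ)·Aᵀ v) − P_{[l,u]}(−(1/μ)·Aᵀ v)‖² − ‖(1/μ)·Aᵀ v‖² ), and both extrema are attained. -/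
open scoped BigOperators
set_option maxHeartbeats 1000000

private lemma scalar_limit {a B : ℝ} (hB : 0 ≤ B)
    (h : ∀ t : ℝ, 0 < t → t ≤ 1 → a ≤ t * B) : a ≤ 0 := by
  by_contra hc
  push_neg at hc
  rcases eq_or_lt_of_le hB with hB0 | hB0
  · have := h 1 one_pos le_rfl; nlinarith
  · have ht1 : 0 < a / (2 * B) := by positivity
    have h1 := h (min 1 (a / (2 * B))) (lt_min one_pos ht1) (min_le_left _ _)
    have h2 : min 1 (a / (2 * B)) ≤ a / (2 * B) := min_le_right _ _
    have h3 : min 1 (a / (2 * B)) * B ≤ (a / (2 * B)) * B :=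
      mul_le_mul_of_nonneg_right h2 hB
    have h4 : (a / (2 * B)) * B = a / 2 := by field_simp
    linarith

private lemma var_ineq {ι : Type*} [Fintype ι] {l u : ι → ℝ}
    {P : (ι → ℝ) → (ι → ℝ)}
    (hP : ∀ x : ι → ℝ, P x ∈ Set.Icc l u ∧
      ∀ w ∈ Set.Icc l u, ∑ i, (x i - P x i) ^ 2 ≤ ∑ i, (x i - w i) ^ 2)
    (x w : ι → ℝ) (hw : w ∈ Set.Icc l u) :
    ∑ i, (x i - P x i) * (w i - P x i) ≤ 0 := by
  have hpK := (hP x).1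
  have hmem : ∀ t : ℝ, 0 ≤ t → t ≤ 1 →
      (fun i => P x i + t * (w i - P x i)) ∈ Set.Icc l u := by
    intro t ht0 ht1
    constructor
    · rw [Pi.le_def]
      intro i
      have h1 := hpK.1 i; have h3 := hw.1 i
      show l i ≤ P x i + t * (w i - P x i)
      nlinarith
    · rw [Pi.le_def]
      intro i
      have h2 := hpK.2 i; have h4 := hw.2 i
      show P x i + t * (w i - P x i) ≤ u i
      nlinarith
  set c := ∑ i, (x i - P x i) * (w i - P x i) with hc
  set d := ∑ i, (w i - P x i) ^ 2 with hd
  have hd0 : 0 ≤ d := Finset.sum_nonneg fun i _ => sq_nonneg _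
  have key : ∀ t : ℝ, 0 ≤ t → t ≤ 1 → 2 * t * c ≤ t ^ 2 * d := by
    intro t ht0 ht1
    have h := (hP x).2 _ (hmem t ht0 ht1)
    have expand : ∑ i, (x i - (P x i + t * (w i - P x i))) ^ 2
        = ∑ i, ((x i - P x i) ^ 2 - 2 * t * ((x i - P x i) * (w i - P x i))
            + t ^ 2 * (w i - P x i) ^ 2) :=
      Finset.sum_congr rfl fun i _ => by ring
    rw [expand, Finset.sum_add_distrib, Finset.sum_sub_distrib,
      ← Finset.mul_sum, ← Finset.mul_sum] at h
    rw [← hc, ← hd] at h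
    linarith
  rcases le_or_gt c 0 with h | h
  · exact h
  · exfalso
    have hd_pos : 0 < d := by
      by_contra hdn
      push_neg at hdn
      have := key 1 zero_le_one le_rfl
      nlinarith
    have ht : 0 < min 1 (c / d) := lt_min one_pos (by positivity)
    have hk := key (min 1 (c / d)) (le_of_lt ht) (min_le_left _ _)
    have h2 : min 1 (c / d) ≤ c / d := min_le_right _ _
    have h5 : min 1 (c / d) * d ≤ c := (le_div_iff₀ hd_pos).mp h2
    nlinarith [mul_pos ht h]
private lemma contractP {ι : Type*} [Fintype ι] {l u : ι → ℝ}
    {P : (ι → ℝ) → (ι → ℝ)}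
    (hP : ∀ x : ι → ℝ, P x ∈ Set.Icc l u ∧
      ∀ w ∈ Set.Icc l u, ∑ i, (x i - P x i) ^ 2 ≤ ∑ i, (x i - w i) ^ 2)
    (x y : ι → ℝ) :
    ∑ i, (P x i - P y i) ^ 2 ≤ ∑ i, (x i - y i) ^ 2 := by
  have c1 := var_ineq hP x (P y) (hP y).1
  have c2 := var_ineq hP y (P x) (hP x).1
  set A := ∑ i, (P x i - P y i) ^ 2 with hA
  set B := ∑ i, (x i - y i) ^ 2 with hB
  set c := ∑ i, (x i - y i) * (P x i - P y i) with hcdef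
  have hA0 : 0 ≤ A := Finset.sum_nonneg fun i _ => sq_nonneg _
  have hB0 : 0 ≤ B := Finset.sum_nonneg fun i _ => sq_nonneg _
  have hAc : A ≤ c := by
    have hsum : ∑ i, ((x i - P x i) * (P y i - P x i) + (y i - P y i) * (P x i - P y i)) ≤ 0 := by
      rw [Finset.sum_add_distrib]; linarith
    have e : ∑ i, ((x i - P x i) * (P y i - P x i) + (y i - P y i) * (P x i - P y i))
        = A - c := by
      rw [hA, hcdef, ← Finset.sum_sub_distrib]
      exact Finset.sum_congr rfl fun i _ => by ring
    linarith [e ▸ hsum]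
  have hcs : c ^ 2 ≤ B * A :=
    Finset.sum_mul_sq_le_sq_mul_sq Finset.univ (fun i => x i - y i) (fun i => P x i - P y i)
  have hc0 : 0 ≤ c := le_trans hA0 hAc
  nlinarith [mul_le_mul hAc hAc hA0 hc0]

private lemma P_cont {ι : Type*} [Fintype ι] {l u : ι → ℝ}
    {P : (ι → ℝ) → (ι → ℝ)}
    (hP : ∀ x : ι → ℝ, P x ∈ Set.Icc l u ∧
      ∀ w ∈ Set.Icc l u, ∑ i, (x i - P x i) ^ 2 ≤ ∑ i, (x i - w i) ^ 2) :
    Continuous P := by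
  refine continuous_pi fun i => ?_
  rw [Metric.continuous_iff]
  intro x ε hε
  set n : ℝ := (Fintype.card ι : ℝ) with hn
  have hn0 : 0 ≤ n := Nat.cast_nonneg _
  refine ⟨ε / (Real.sqrt n + 1), by positivity, fun y hy => ?_⟩
  have h1 : (P y i - P x i) ^ 2 ≤ ∑ j, (P y j - P x j) ^ 2 :=
    Finset.single_le_sum (f := fun j => (P y j - P x j) ^ 2) (fun j _ => sq_nonneg _) (Finset.mem_univ i)
  have h2 := contractP hP y x
  have h3 : ∑ j, (y j - x j) ^ 2 ≤ n * dist y x ^ 2 := by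
    calc ∑ j, (y j - x j) ^ 2 ≤ ∑ _j : ι, dist y x ^ 2 := by
          refine Finset.sum_le_sum fun j _ => ?_
          have hd := dist_le_pi_dist y x j
          have : |y j - x j| ≤ dist y x := by rwa [← Real.dist_eq]
          nlinarith [abs_nonneg (y j - x j), sq_abs (y j - x j)]
      _ = n * dist y x ^ 2 := by rw [Finset.sum_const, hn]; simp [nsmul_eq_mul]
  have hd0 : 0 ≤ dist y x := dist_nonneg
  have hs : Real.sqrt n ^ 2 = n := Real.sq_sqrt hn0
  have hs0 : 0 ≤ Real.sqrt n := Real.sqrt_nonneg n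
  have h4 : n * dist y x ^ 2 < ε ^ 2 := by
    have hm : dist y x * (Real.sqrt n + 1) < ε :=
      (lt_div_iff₀ (by positivity)).mp hy
    nlinarith [mul_nonneg (add_nonneg hs0 zero_le_one) hd0, hm]
  have h5 : (P y i - P x i) ^ 2 < ε ^ 2 := by linarith
  rw [Real.dist_eq, abs_lt]
  constructor <;> nlinarith

/-- **Strong duality between the quadratically regularized TV-ULoG problem and the
smoothed dual** (Remark 4): the minimum over `x` in the discrete tube `[l, u]` of
`∑ j, ‖(A x) j‖ + (μ/2)‖x‖²` equals the maximum over `v ∈ S` of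
`(μ/2)·(‖(−(1/μ)·Aᵀ v) − P_{[l,u]}(−(1/μ)·Aᵀ v)‖² − ‖(1/μ)·Aᵀ v‖²)`,
where `P` is the metric projection onto the tube (characterized by lying in the tube
and minimizing the squared Euclidean distance), and both extrema are attained. -/
theorem tv_ulog_regularized_strong_duality
    {ι κ : Type*} [Fintype ι] [Fintype κ] [Nonempty ι] [Nonempty κ]
    (A : (ι → ℝ) →ₗ[ℝ] (κ → EuclideanSpace ℝ (Fin 3)))
    (At : (κ → EuclideanSpace ℝ (Fin 3)) →ₗ[ℝ] (ι → ℝ))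
    (hadj : ∀ (v : κ → EuclideanSpace ℝ (Fin 3)) (w : ι → ℝ),
      ∑ i, At v i * w i = ∑ j, (inner ℝ (v j) (A w j) : ℝ))
    (l u : ι → ℝ) (hlu : ∀ i, l i ≤ u i)
    (μ : ℝ) (hμ : 0 < μ)
    (P : (ι → ℝ) → (ι → ℝ))
    (hP : ∀ x : ι → ℝ, P x ∈ Set.Icc l u ∧
      ∀ w ∈ Set.Icc l u, ∑ i, (x i - P x i) ^ 2 ≤ ∑ i, (x i - w i) ^ 2) :
    ∃ m : ℝ,
      IsLeast
        ((fun x => (∑ j, ‖A x j‖) + μ / 2 * ∑ i, (x i) ^ 2) '' Set.Icc l u) m ∧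
      IsGreatest
        ((fun v => μ / 2 *
            ((∑ i, ((-(1 / μ) • At v) i - P (-(1 / μ) • At v) i) ^ 2)
              - ∑ i, ((1 / μ) * At v i) ^ 2)) ''
          {v : κ → EuclideanSpace ℝ (Fin 3) | ∀ j, ‖v j‖ ≤ 1}) m := by
  classical
  have hμ' : μ ≠ 0 := ne_of_gt hμ
  set S : Set (κ → EuclideanSpace ℝ (Fin 3)) := {v : κ → EuclideanSpace ℝ (Fin 3) | ∀ j, ‖v j‖ ≤ 1} with hSdef
  set f : (ι → ℝ) → ℝ := fun x => (∑ j, ‖A x j‖) + μ / 2 * ∑ i, (x i) ^ 2 with hfdef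
  set D : (κ → EuclideanSpace ℝ (Fin 3)) → ℝ := fun v => μ / 2 *
      ((∑ i, ((-(1 / μ) • At v) i - P (-(1 / μ) • At v) i) ^ 2)
        - ∑ i, ((1 / μ) * At v i) ^ 2) with hDdef
  set z : (κ → EuclideanSpace ℝ (Fin 3)) → (ι → ℝ) := fun v => -(1 / μ) • At v with hzdef
  set L : (ι → ℝ) → (κ → EuclideanSpace ℝ (Fin 3)) → ℝ :=
    fun x v => (∑ j, (inner ℝ (v j) (A x j) : ℝ)) + μ / 2 * ∑ i, (x i) ^ 2 with hLdef
  have hzi : ∀ v i, z v i = -(1 / μ) * At v i := by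
    intro v i; rw [hzdef]; simp
  -- quadratic form of the Lagrangian
  have I1 : ∀ (x : ι → ℝ) (v : κ → EuclideanSpace ℝ (Fin 3)),
      L x v = μ / 2 * ∑ i, (x i - z v i) ^ 2 - μ / 2 * ∑ i, (z v i) ^ 2 := by
    intro x v
    simp only [hLdef]
    rw [← hadj v x, Finset.mul_sum, Finset.mul_sum, Finset.mul_sum,
      ← Finset.sum_add_distrib, ← Finset.sum_sub_distrib]
    refine Finset.sum_congr rfl fun i _ => ?_
    rw [hzi]
    field_simp
    ring
  -- the dual objective is the Lagrangian at the projected point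
  have I2 : ∀ v, D v = L (P (z v)) v := by
    intro v
    rw [I1]
    have e1 : ∑ i, ((-(1 / μ) • At v) i - P (-(1 / μ) • At v) i) ^ 2
        = ∑ i, (P (z v) i - z v i) ^ 2 := by
      refine Finset.sum_congr rfl fun i _ => ?_
      have : (-(1 / μ) • At v) i = z v i := by rw [hzdef]
      rw [this]; ring
    have e2 : ∑ i, ((1 / μ) * At v i) ^ 2 = ∑ i, (z v i) ^ 2 := by
      refine Finset.sum_congr rfl fun i _ => ?_
      rw [hzi]; ring
    rw [hDdef]
    simp only
    rw [e1, e2]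
    ring
  -- minimality of the projection for the Lagrangian
  have hPmin : ∀ v, ∀ w ∈ Set.Icc l u, L (P (z v)) v ≤ L w v := by
    intro v w hw
    rw [I1, I1]
    have h := (hP (z v)).2 w hw
    have e1 : ∑ i, (z v i - P (z v) i) ^ 2 = ∑ i, (P (z v) i - z v i) ^ 2 :=
      Finset.sum_congr rfl fun i _ => by ring
    have e2 : ∑ i, (z v i - w i) ^ 2 = ∑ i, (w i - z v i) ^ 2 :=
      Finset.sum_congr rfl fun i _ => by ring
    rw [e1, e2] at h
    nlinarith
  -- strong convexity refinement
  have hSC : ∀ v, ∀ w ∈ Set.Icc l u,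
      L (P (z v)) v + μ / 2 * ∑ i, (w i - P (z v) i) ^ 2 ≤ L w v := by
    intro v w hw
    have hvar := var_ineq hP (z v) w hw
    rw [I1, I1]
    have e : ∑ i, (w i - z v i) ^ 2 - ∑ i, (P (z v) i - z v i) ^ 2
        - ∑ i, (w i - P (z v) i) ^ 2
        = (-2) * ∑ i, (z v i - P (z v) i) * (w i - P (z v) i) := by
      rw [Finset.mul_sum, ← Finset.sum_sub_distrib, ← Finset.sum_sub_distrib]
      exact Finset.sum_congr rfl fun i _ => by ring
    nlinarith
  -- weak duality ingredient: L ≤ f on S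
  have hLf : ∀ v ∈ S, ∀ x, L x v ≤ f x := by
    intro v hv x
    simp only [hLdef, hfdef]
    have : ∑ j, (inner ℝ (v j) (A x j) : ℝ) ≤ ∑ j, ‖A x j‖ := by
      refine Finset.sum_le_sum fun j _ => ?_
      calc (inner ℝ (v j) (A x j) : ℝ) ≤ ‖v j‖ * ‖A x j‖ := real_inner_le_norm _ _
        _ ≤ 1 * ‖A x j‖ := mul_le_mul_of_nonneg_right (hv j) (norm_nonneg _)
        _ = ‖A x j‖ := one_mul _
    linarith
  -- tightness: for every x there is v ∈ S with L x v = f x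
  have hvhat : ∀ x : ι → ℝ, ∃ v ∈ S, L x v = f x := by
    intro x
    refine ⟨fun j => ‖A x j‖⁻¹ • A x j, ?_, ?_⟩
    · intro j
      rcases eq_or_ne (A x j) 0 with h | h
      · simp [h]
      · rw [norm_smul, norm_inv, norm_norm, inv_mul_cancel₀ (norm_ne_zero_iff.mpr h)]
    · simp only [hLdef, hfdef]
      congr 1
      refine Finset.sum_congr rfl fun j _ => ?_
      rcases eq_or_ne (A x j) 0 with h | h
      · simp [h]
      · rw [real_inner_smul_left, real_inner_self_eq_norm_sq]
        field_simp [norm_ne_zero_iff.mpr h]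
  -- continuity of the dual objective
  have hAtc : Continuous At := At.continuous_of_finiteDimensional
  have hzc : Continuous z := by
    rw [hzdef]; exact hAtc.const_smul (-(1 / μ))
  have hPc : Continuous P := P_cont hP
  have hPzc : Continuous (fun v => P (z v)) := hPc.comp hzc
  have hDcont : Continuous D := by
    rw [hDdef]
    refine continuous_const.mul (Continuous.sub ?_ ?_)
    · refine continuous_finset_sum _ fun i _ => ?_
      have h1 : Continuous (fun v => (-(1 / μ) • At v) i) := by
        have : (fun v => (-(1 / μ) • At v) i) = fun v => z v i := by
          funext v; rw [hzdef]
        rw [this]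
        exact (continuous_apply i).comp hzc
      have h2 : Continuous (fun v => P (-(1 / μ) • At v) i) := by
        have : (fun v => P (-(1 / μ) • At v) i) = fun v => P (z v) i := by
          funext v; rw [hzdef]
        rw [this]
        exact (continuous_apply i).comp hPzc
      exact (h1.sub h2).pow 2
    · refine continuous_finset_sum _ fun i _ => ?_
      exact (continuous_const.mul ((continuous_apply i).comp hAtc)).pow 2
  -- compactness of S and existence of a dual maximizer
  have hSball : S = Metric.closedBall (0 : κ → EuclideanSpace ℝ (Fin 3)) 1 := by
    ext v
    simp only [hSdef, Set.mem_setOf_eq, Metric.mem_closedBall, dist_zero_right]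
    rw [pi_norm_le_iff_of_nonneg zero_le_one]
  have hScpt : IsCompact S := by
    rw [hSball]; exact isCompact_closedBall _ _
  have hS0 : (0 : κ → EuclideanSpace ℝ (Fin 3)) ∈ S := by
    intro j; simp
  obtain ⟨vs, hvsS, hvsmax⟩ := hScpt.exists_isMaxOn ⟨0, hS0⟩ hDcont.continuousOn
  clear_value f D z L
  set xs := P (z vs) with hxsdef
  have hxsK : xs ∈ Set.Icc l u := (hP _).1
  -- first-order optimality of the dual maximizer
  have hfo : ∀ v ∈ S,
      (∑ j, (inner ℝ (v j) (A xs j) : ℝ)) ≤ ∑ j, (inner ℝ (vs j) (A xs j) : ℝ) := by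
    intro v hv
    set sstar := (∑ j, (inner ℝ (v j) (A xs j) : ℝ)) - ∑ j, (inner ℝ (vs j) (A xs j) : ℝ)
      with hsstar
    set C2 := ∑ i, (At (v - vs) i) ^ 2 with hC2
    have hC20 : 0 ≤ C2 := Finset.sum_nonneg fun i _ => sq_nonneg _
    have key : ∀ t : ℝ, 0 < t → t ≤ 1 → 2 * μ * sstar ≤ t * C2 := by
      intro t ht0 ht1
      set vt := vs + t • (v - vs) with hvt
      have hvtS : vt ∈ S := by
        intro j
        have hj : vt j = (1 - t) • vs j + t • v j := by
          rw [hvt]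
          simp only [Pi.add_apply, Pi.smul_apply, Pi.sub_apply, smul_sub, sub_smul, one_smul]
          abel
        rw [hj]
        calc ‖(1 - t) • vs j + t • v j‖ ≤ ‖(1 - t) • vs j‖ + ‖t • v j‖ := norm_add_le _ _
          _ = |1 - t| * ‖vs j‖ + |t| * ‖v j‖ := by
              rw [norm_smul, norm_smul, Real.norm_eq_abs, Real.norm_eq_abs]
          _ ≤ (1 - t) * 1 + t * 1 := by
              rw [abs_of_nonneg (by linarith), abs_of_nonneg (le_of_lt ht0)]
              have := hvsS j
              have := hv j
              have := norm_nonneg (vs j)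
              have := norm_nonneg (v j)
              nlinarith
          _ = 1 := by ring
      set xt := P (z vt) with hxtdef
      have hxtK : xt ∈ Set.Icc l u := (hP _).1
      have h1 : D vt ≤ D vs := hvsmax hvtS
      have h2 : D vt = L xt vt := I2 vt
      set a1 := ∑ j, (inner ℝ (v j) (A xt j) : ℝ) with ha1
      set a2 := ∑ j, (inner ℝ (vs j) (A xt j) : ℝ) with ha2
      set b1 := ∑ j, (inner ℝ (v j) (A xs j) : ℝ) with hb1
      set b2 := ∑ j, (inner ℝ (vs j) (A xs j) : ℝ) with hb2
      have h3 : L xt vt = L xt vs + t * (a1 - a2) := by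
        simp only [hLdef]
        have e : ∑ j, (inner ℝ (vt j) (A xt j) : ℝ)
            = ∑ j, ((inner ℝ (vs j) (A xt j) : ℝ)
              + t * ((inner ℝ (v j) (A xt j) : ℝ) - (inner ℝ (vs j) (A xt j) : ℝ))) := by
          refine Finset.sum_congr rfl fun j _ => ?_
          have hj : vt j = vs j + t • (v j - vs j) := rfl
          rw [hj, inner_add_left, real_inner_smul_left, inner_sub_left]
        have e2 : ∑ j, (t * ((inner ℝ (v j) (A xt j) : ℝ) - (inner ℝ (vs j) (A xt j) : ℝ)))
            = t * (a1 - a2) := by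
          rw [ha1, ha2, ← Finset.sum_sub_distrib, Finset.mul_sum]
        rw [e, Finset.sum_add_distrib, e2]
        ring
      have h4 : D vs + μ / 2 * ∑ i, (xt i - xs i) ^ 2 ≤ L xt vs := by
        have hsc := hSC vs xt hxtK
        have : D vs = L (P (z vs)) vs := I2 vs
        rw [this]
        exact hsc
      set d2 := ∑ i, (xt i - xs i) ^ 2 with hd2
      have hd20 : 0 ≤ d2 := Finset.sum_nonneg fun i _ => sq_nonneg _
      set r := ∑ i, At (v - vs) i * (xt i - xs i) with hr
      have h5 : a1 - a2 = sstar + r := by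
        have ha := hadj (v - vs) (xt - xs)
        simp only [map_sub, Pi.sub_apply, inner_sub_left, inner_sub_right] at ha
        rw [Finset.sum_sub_distrib, Finset.sum_sub_distrib, Finset.sum_sub_distrib] at ha
        have hr' : r = ∑ i, (At v i - At vs i) * (xt i - xs i) := by
          rw [hr]
          refine Finset.sum_congr rfl fun i _ => ?_
          rw [map_sub]
          rfl
        rw [← hr'] at ha
        rw [← ha1, ← ha2, ← hb1, ← hb2] at ha
        rw [hsstar]
        linarith
      have h6 : r ^ 2 ≤ C2 * d2 := by
        rw [hr, hC2, hd2]
        exact Finset.sum_mul_sq_le_sq_mul_sq Finset.univ _ _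
      clear_value vt xt a1 a2 b1 b2 d2 r sstar C2
      have h7 : μ / 2 * d2 + t * (sstar + r) ≤ 0 := by
        rw [h2, h3, h5] at h1
        linarith
      rcases eq_or_lt_of_le hd20 with hd2e | hd2p
      · have hr0 : r = 0 := by nlinarith [sq_nonneg r]
        rw [hr0, ← hd2e] at h7
        have e1 : t * sstar ≤ 0 := by linarith
        nlinarith [mul_le_mul_of_nonneg_left e1 (by positivity : (0:ℝ) ≤ 2 * μ),
          mul_nonneg (mul_nonneg ht0.le ht0.le) hC20, ht0]
      · nlinarith [sq_nonneg (t * r + μ * d2),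
          mul_le_mul_of_nonneg_left h6 (mul_pos ht0 ht0).le,
          mul_le_mul_of_nonneg_left h7 (by positivity : (0:ℝ) ≤ 2 * μ * d2),
          mul_pos ht0 hd2p]
    clear_value sstar C2
    have h8 : 2 * μ * sstar ≤ 0 := scalar_limit hC20 key
    have h9 : sstar ≤ 0 := by nlinarith
    rw [hsstar] at h9
    linarith
  -- tightness at the optimum
  have heq : L xs vs = f xs := by
    obtain ⟨vh, hvhS, hvhL⟩ := hvhat xs
    have h1 := hfo vh hvhS
    have h2 := hLf vs hvsS xs
    have h3 : L xs vh ≤ L xs vs := by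
      simp only [hLdef]
      linarith
    rw [hvhL] at h3
    linarith
  have hm : D vs = f xs := by
    have : D vs = L (P (z vs)) vs := I2 vs
    rw [this]
    exact heq
  refine ⟨D vs, ⟨⟨xs, hxsK, hm.symm⟩, ?_⟩, ⟨⟨vs, hvsS, rfl⟩, ?_⟩⟩
  · rintro y ⟨x, hxK, rfl⟩
    calc D vs = L (P (z vs)) vs := I2 vs
      _ ≤ L x vs := hPmin vs x hxK
      _ ≤ f x := hLf vs hvsS x
  · rintro y ⟨w, hwS, rfl⟩
    exact hvsmax hwS
end

section
/- The scale-normalized Laplacian of a Gaussian blob attains its strict global minimum exactly at the blob's center and size (Example 1): Fix m ∈ EuclideanSpace ℝ (Fin 2) and s > 0, and define u(x, t) = (2π(s + t))⁻¹ · exp(−‖x − m‖² / (2(s + t))) for t ≥ 0 and L(x, t) = t·Δu(x, t), where Δ is the spatial Laplacian. Then for all (x, t) ∈ ℝ² × (0, ∞), L(x, t) ≥ −1/(4πs), with equality if and only if x = m and t = s. -/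
open scoped BigOperators

/-- Spatial Laplacian of `f : ℝ² → ℝ` at `x`: the sum over `i` of the second
derivative at `0` of the one-dimensional slice `a ↦ f (x + a • eᵢ)`. -/
noncomputable def spatialLaplacian (f : EuclideanSpace ℝ (Fin 2) → ℝ)
    (x : EuclideanSpace ℝ (Fin 2)) : ℝ :=
  ∑ i : Fin 2,
    iteratedDeriv 2 (fun a : ℝ => f (x + a • EuclideanSpace.single i (1 : ℝ))) 0

lemma hasDerivAt_quad (α β γ a : ℝ) :
    HasDerivAt (fun a : ℝ => α + β*a + γ*a^2) (β + 2*γ*a) a := by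
  have h : HasDerivAt (fun a : ℝ => α + β*a + γ*a^2) (0 + β*1 + γ*(↑2*a^1)) a :=
    (((hasDerivAt_const a α).add ((hasDerivAt_id a).const_mul β)).add
      ((hasDerivAt_pow 2 a).const_mul γ))
  simpa using h.congr_deriv (by ring)

lemma second_deriv_exp_quad (c α β γ : ℝ) :
    iteratedDeriv 2 (fun a : ℝ => c * Real.exp (α + β*a + γ*a^2)) 0
      = c * Real.exp α * (β^2 + 2*γ) := by
  have h1 : ∀ a : ℝ, HasDerivAt (fun a : ℝ => c * Real.exp (α + β*a + γ*a^2))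
      (c * (Real.exp (α + β*a + γ*a^2) * (β + 2*γ*a))) a := fun a =>
    ((hasDerivAt_quad α β γ a).exp).const_mul c
  have hd : deriv (fun a : ℝ => c * Real.exp (α + β*a + γ*a^2))
      = fun a => c * (Real.exp (α + β*a + γ*a^2) * (β + 2*γ*a)) := by
    funext a; exact (h1 a).deriv
  rw [show (2:ℕ) = 1 + 1 from rfl, iteratedDeriv_succ, iteratedDeriv_one, hd]
  have h2 : HasDerivAt (fun a => c * (Real.exp (α + β*a + γ*a^2) * (β + 2*γ*a)))
      (c * ((Real.exp (α + β*0 + γ*0^2) * (β + 2*γ*0)) * (β + 2*γ*0)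
        + Real.exp (α + β*0 + γ*0^2) * (2*γ))) 0 := by
    refine HasDerivAt.const_mul c ?_
    refine HasDerivAt.mul ((hasDerivAt_quad α β γ 0).exp) ?_
    simpa using ((hasDerivAt_id (0:ℝ)).const_mul (2*γ)).const_add β
  rw [h2.deriv]; ring_nf

lemma norm_shift (v : EuclideanSpace ℝ (Fin 2)) (i : Fin 2) (a : ℝ) :
    ‖v + a • EuclideanSpace.single i (1:ℝ)‖^2 = ‖v‖^2 + 2*(v i)*a + a^2 := by
  rw [norm_add_sq_real, real_inner_smul_right, EuclideanSpace.inner_single_right,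
    norm_smul, EuclideanSpace.norm_single]
  simp [mul_pow, sq_abs]
  ring

lemma norm_sq_sum (v : EuclideanSpace ℝ (Fin 2)) : ‖v‖^2 = (v 0)^2 + (v 1)^2 := by
  rw [EuclideanSpace.norm_eq, Real.sq_sqrt (by positivity)]
  simp [Fin.sum_univ_two, sq_abs]

lemma key_ineq (s t q : ℝ) (hs : 0 < s) (ht : 0 < t) (hq : 0 ≤ q) :
    -(1/(4*Real.pi*s)) ≤ t * ((2*Real.pi*(s+t))⁻¹ * Real.exp (-q/(2*(s+t))) * ((q - 2*(s+t))/(s+t)^2))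
    ∧ (t * ((2*Real.pi*(s+t))⁻¹ * Real.exp (-q/(2*(s+t))) * ((q - 2*(s+t))/(s+t)^2))
        = -(1/(4*Real.pi*s)) ↔ q = 0 ∧ t = s) := by
  have hπ : 0 < Real.pi := Real.pi_pos
  set σ := s + t with hσdef
  have hσ : 0 < σ := by rw [hσdef]; linarith
  set E := Real.exp (-q/(2*σ)) with hE
  have hE0 : 0 < E := Real.exp_pos _
  have hE1 : E ≤ 1 := Real.exp_le_one_iff.mpr (by
    apply div_nonpos_of_nonpos_of_nonneg <;> nlinarith)
  have h2σ : 0 < 2*σ := by linarith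
  have hlow : 1 - q/(2*σ) ≤ E := by
    have h := Real.add_one_le_exp (-q/(2*σ))
    rw [hE, neg_div]; rw [neg_div] at h; linarith
  have hlow' : 2*σ - q ≤ 2*σ*E := by
    have h := mul_le_mul_of_nonneg_left hlow h2σ.le
    rw [mul_sub, mul_div_cancel₀ _ (ne_of_gt h2σ)] at h
    linarith
  have hltq : q ≠ 0 → 2*σ - q < 2*σ*E := by
    intro hq0
    have hlt : 1 - q/(2*σ) < E := by
      have h := Real.add_one_lt_exp (x := -q/(2*σ)) (by
        simp only [ne_eq, neg_div, neg_eq_zero, div_eq_zero_iff]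
        push_neg; exact ⟨hq0, by nlinarith⟩)
      rw [hE, neg_div]; rw [neg_div] at h; linarith
    have h := mul_lt_mul_of_pos_left hlt h2σ
    rw [mul_sub, mul_div_cancel₀ _ (ne_of_gt h2σ)] at h
    linarith
  have hEq1 : q = 0 → E = 1 := by intro h; rw [hE, h]; simp
  clear_value σ E
  clear hE hlow
  have hst : 4*s*t ≤ σ^2 := by nlinarith [sq_nonneg (s-t)]
  have hrw : t * ((2*Real.pi*σ)⁻¹ * E * ((q - 2*σ)/σ^2))
      = (t*E*(q-2*σ)) / (2*Real.pi*σ^3) := by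
    field_simp
  have hkey : 4*s*t*(E*(2*σ-q)) ≤ 2*σ^3 := by
    nlinarith [mul_le_mul_of_nonneg_left hlow' hE0.le,
      mul_pos hs ht,
      mul_le_mul_of_nonneg_left (show E*(2*σ-q) ≤ 2*σ by nlinarith) (by positivity : (0:ℝ) ≤ 4*s*t)]
  constructor
  · rw [hrw, neg_le, ← neg_div, div_le_div_iff₀ (by positivity) (by positivity)]
    nlinarith [mul_le_mul_of_nonneg_left hkey hπ.le]
  · constructor
    · intro heq
      by_contra hcon
      push_neg at hcon
      have hstrict : 4*s*t*(E*(2*σ-q)) < 2*σ^3 := by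
        rcases lt_or_eq_of_le hq with hq0 | hq0
        · have hlt' := hltq (ne_of_gt hq0)
          have h1 : E*(2*σ-q) < 2*σ := by nlinarith
          nlinarith [mul_pos hs ht]
        · have hts : t ≠ s := fun h => hcon hq0.symm h
          have hstlt : 4*s*t < σ^2 := by
            rcases lt_or_gt_of_ne hts with h | h <;> nlinarith [sq_nonneg (s-t)]
          rw [← hq0, hEq1 hq0.symm]; nlinarith
      rw [hrw] at heq
      rw [div_eq_iff (by positivity)] at heq
      field_simp at heq
      nlinarith [mul_lt_mul_of_pos_left hstrict hπ, heq]
    · rintro ⟨hq0, hts⟩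
      have hE1' := hEq1 hq0
      subst hq0 hts
      have hσ2 : σ = 2*t := by rw [hσdef]; ring
      rw [hrw, hE1', hσ2]
      rw [div_eq_iff (by positivity)]
      field_simp
      ring

/-- **The scale-normalized Laplacian of a Gaussian blob attains its strict global
minimum exactly at the blob's center and size** (Example 1): with
`u(x, t) = (2π(s+t))⁻¹ exp(−‖x − m‖²/(2(s+t)))` for `t ≥ 0` and
`L(x, t) = t·Δu(x, t)`, one has `L(x, t) ≥ −1/(4πs)` for all `(x, t) ∈ ℝ² × (0, ∞)`,
with equality if and only if `x = m` and `t = s`. -/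
theorem gaussian_blob_scale_normalized_laplacian_strict_min
    (m : EuclideanSpace ℝ (Fin 2)) (s : ℝ) (hs : 0 < s)
    (u : EuclideanSpace ℝ (Fin 2) × ℝ → ℝ)
    (hu : ∀ (x : EuclideanSpace ℝ (Fin 2)) (t : ℝ), 0 ≤ t →
      u (x, t) = (2 * Real.pi * (s + t))⁻¹ * Real.exp (-‖x - m‖ ^ 2 / (2 * (s + t)))) :
    ∀ (x : EuclideanSpace ℝ (Fin 2)) (t : ℝ), 0 < t →
      -(1 / (4 * Real.pi * s)) ≤ t * spatialLaplacian (fun y => u (y, t)) x ∧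
      (t * spatialLaplacian (fun y => u (y, t)) x = -(1 / (4 * Real.pi * s))
        ↔ x = m ∧ t = s) := by
  intro x t ht
  have hσ : 0 < s + t := by linarith
  have hπ : 0 < Real.pi := Real.pi_pos
  have hq : 0 ≤ ‖x - m‖^2 := by positivity
  have hslice : ∀ i : Fin 2, (fun a : ℝ => u (x + a • EuclideanSpace.single i (1:ℝ), t))
      = fun a : ℝ => (2*Real.pi*(s+t))⁻¹ *
          Real.exp ((-‖x-m‖^2/(2*(s+t))) + (-((x-m) i)/(s+t))*a + (-(1/(2*(s+t))))*a^2) := by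
    intro i; funext a
    rw [hu _ t ht.le]
    congr 1
    have h1 : x + a • EuclideanSpace.single i (1:ℝ) - m
        = (x - m) + a • EuclideanSpace.single i (1:ℝ) := by abel
    rw [h1, norm_shift]
    field_simp
    ring
  have hLap : spatialLaplacian (fun y => u (y, t)) x
      = (2*Real.pi*(s+t))⁻¹ * Real.exp (-‖x-m‖^2/(2*(s+t)))
          * ((‖x-m‖^2 - 2*(s+t))/(s+t)^2) := by
    have hnorm := norm_sq_sum (x-m)
    simp only [spatialLaplacian, Fin.sum_univ_two]
    rw [hslice 0, hslice 1, second_deriv_exp_quad, second_deriv_exp_quad, hnorm]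
    field_simp
    ring
  have hkey := key_ineq s t (‖x-m‖^2) hs ht hq
  have hmatch : t * spatialLaplacian (fun y => u (y, t)) x
      = t * ((2*Real.pi*(s+t))⁻¹ * Real.exp (-‖x-m‖^2/(2*(s+t)))
          * ((‖x-m‖^2 - 2*(s+t))/(s+t)^2)) := by rw [hLap]
  have hxm : ‖x-m‖^2 = 0 ↔ x = m := by
    rw [pow_eq_zero_iff (two_ne_zero), norm_eq_zero, sub_eq_zero]
  constructor
  · rw [hmatch]; exact hkey.1
  · rw [hmatch]
    rw [hkey.2, hxm]
end
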